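/- Let ν̄, κ̄ ∈ ℝ with ν̄² > 4κ̄, let r > 0, and set λ± := ((−ν̄ ± √(ν̄² − 4κ̄))/2)·r² (so λ₊ ≠ λ₋). Then for every t ∈ ℝ the matrix exponential of t·A, where A := [[0, −r], [κ̄r³, −ν̄r²]], is exp(tA) = [[ (λ₊e^{λ₋t} − λ₋e^{λ₊t})/(λ₊ − λ₋), −r(e^{λ₊t} − e^{λ₋t})/(λ₊ − λ₋) ], [ κ̄r³(e^{λ₊t} − e^{λ₋t})/(λ₊ − λ₋), (λ₊e^{λ₊t} − λ₋e^{λ₋t})/(λ₊ − λ₋) ]]. -/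

import Mathlib

open Polynomial

/-- For ν̄² > 4κ̄ and r > 0, with λ± = ((−ν̄ ± √(ν̄²−4κ̄))/2)·r² (so λ₊ ≠ λ₋), the matrix
exponential of t·A, A = [[0, −r], [κ̄r³, −ν̄r²]], is given by the explicit semigroup
formula of the linearized Navier–Stokes–Korteweg system. -/
theorem nsk_symbol_matrix_exponential (ν κ r : ℝ) (hνκ : 4 * κ < ν ^ 2) (hr : 0 < r) :
    let A : Matrix (Fin 2) (Fin 2) ℝ := !![0, -r; κ * r ^ 3, -ν * r ^ 2]
    let lamp : ℝ := ((-ν + Real.sqrt (ν ^ 2 - 4 * κ)) / 2) * r ^ 2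
    let lamm : ℝ := ((-ν - Real.sqrt (ν ^ 2 - 4 * κ)) / 2) * r ^ 2
    lamp ≠ lamm ∧
      ∀ t : ℝ,
        NormedSpace.exp (t • A) =
          !![(lamp * Real.exp (lamm * t) - lamm * Real.exp (lamp * t)) / (lamp - lamm),
              -r * (Real.exp (lamp * t) - Real.exp (lamm * t)) / (lamp - lamm);
            κ * r ^ 3 * (Real.exp (lamp * t) - Real.exp (lamm * t)) / (lamp - lamm),
              (lamp * Real.exp (lamp * t) - lamm * Real.exp (lamm * t)) / (lamp - lamm)] := by
  intro A lamp lamm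
  have hA : A = !![0, -r; κ * r ^ 3, -ν * r ^ 2] := rfl
  have hspos : 0 < Real.sqrt (ν ^ 2 - 4 * κ) := Real.sqrt_pos.mpr (by linarith)
  have hs2 : Real.sqrt (ν ^ 2 - 4 * κ) ^ 2 = ν ^ 2 - 4 * κ := Real.sq_sqrt (by linarith)
  have hdiff : lamp - lamm = Real.sqrt (ν ^ 2 - 4 * κ) * r ^ 2 := by
    simp only [lamp, lamm]; ring
  have hsum : lamp + lamm = -ν * r ^ 2 := by simp only [lamp, lamm]; ring
  have hprod : lamp * lamm = κ * r ^ 4 := by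
    have h : lamp * lamm = ((ν ^ 2 - Real.sqrt (ν ^ 2 - 4 * κ) ^ 2) / 4) * r ^ 4 := by
      simp only [lamp, lamm]; ring
    rw [h, hs2]; ring
  clear_value lamp lamm A
  subst hA
  have hdne : lamp - lamm ≠ 0 := by rw [hdiff]; positivity
  have hne : lamp ≠ lamm := sub_ne_zero.mp hdne
  have hcharp : lamp ^ 2 + ν * r ^ 2 * lamp + κ * r ^ 4 = 0 := by
    linear_combination lamp * hsum - hprod
  have hcharm : lamm ^ 2 + ν * r ^ 2 * lamm + κ * r ^ 4 = 0 := by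
    linear_combination lamm * hsum - hprod
  refine ⟨hne, fun t => ?_⟩
  set P : Matrix (Fin 2) (Fin 2) ℝ := !![r, r; -lamp, -lamm] with hP
  set d : ℝ := r * (lamp - lamm) with hd
  have hdnz : d ≠ 0 := mul_ne_zero hr.ne' hdne
  set Q : Matrix (Fin 2) (Fin 2) ℝ := d⁻¹ • !![-lamm, -r; lamp, r] with hQ
  have hPQ : P * Q = 1 := by
    rw [hP, hQ, Matrix.mul_smul, Matrix.mul_fin_two]
    ext i j
    fin_cases i <;> fin_cases j <;>
      simp [Matrix.smul_apply] <;> field_simp [hd] <;> ring <;> simp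
  have hQP : Q * P = 1 := by
    rw [hQ, hP, Matrix.smul_mul, Matrix.mul_fin_two]
    ext i j
    fin_cases i <;> fin_cases j <;>
      simp [Matrix.smul_apply] <;> field_simp [hd] <;> ring <;> simp
  set U : (Matrix (Fin 2) (Fin 2) ℝ)ˣ := ⟨P, Q, hPQ, hQP⟩ with hU
  set D : Matrix (Fin 2) (Fin 2) ℝ := Matrix.diagonal ![t * lamp, t * lamm] with hD
  have hDeq : D = !![t * lamp, 0; 0, t * lamm] := by
    rw [hD]; ext i j; fin_cases i <;> fin_cases j <;> simp [Matrix.diagonal]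
  have hconj : t • !![(0:ℝ), -r; κ * r ^ 3, -ν * r ^ 2] =
      (U : Matrix (Fin 2) (Fin 2) ℝ) * D * (↑U⁻¹ : Matrix (Fin 2) (Fin 2) ℝ) := by
    show _ = P * D * Q
    have h1 : P * D = (t • !![(0:ℝ), -r; κ * r ^ 3, -ν * r ^ 2]) * P := by
      rw [hP, hDeq, Matrix.smul_mul, Matrix.mul_fin_two, Matrix.mul_fin_two]
      ext i j
      fin_cases i <;> fin_cases j
      · simp [Matrix.smul_apply]; ring
      · simp [Matrix.smul_apply]; ring
      · simp [Matrix.smul_apply]; linear_combination (-t) * hcharp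
      · simp [Matrix.smul_apply]; linear_combination (-t) * hcharm
    calc t • !![(0:ℝ), -r; κ * r ^ 3, -ν * r ^ 2]
        = (t • !![(0:ℝ), -r; κ * r ^ 3, -ν * r ^ 2]) * (P * Q) := by rw [hPQ, mul_one]
      _ = ((t • !![(0:ℝ), -r; κ * r ^ 3, -ν * r ^ 2]) * P) * Q := by rw [mul_assoc]
      _ = P * D * Q := by rw [h1]
  rw [hconj, Matrix.exp_units_conj U D]
  have hexpD : NormedSpace.exp D = !![Real.exp (lamp * t), 0; 0, Real.exp (lamm * t)] := by
    rw [hD, Matrix.exp_diagonal]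
    ext i j
    fin_cases i <;> fin_cases j <;>
      simp [Matrix.diagonal, ← Real.exp_eq_exp_ℝ, mul_comm]
  rw [hexpD]
  show P * _ * Q = _
  rw [hP, hQ, Matrix.mul_fin_two, Matrix.mul_smul, Matrix.mul_fin_two]
  ext i j
  fin_cases i <;> fin_cases j
  · simp [Matrix.smul_apply, hd]; field_simp; ring
  · simp [Matrix.smul_apply, hd]; field_simp; ring
  · simp [Matrix.smul_apply, hd]; field_simp
    linear_combination (Real.exp (lamp * t) - Real.exp (lamm * t)) * hprod
  · simp [Matrix.smul_apply, hd]; field_simp; ring
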